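/- Let f : ℝ^d → ℝ be convex and differentiable and satisfy the block-Lipschitz assumption. Then for every α > 0 and all x, y ∈ ℝ^d: f(y) − f(x) ≤ ⟨∇f(x), y − x⟩ + (α/4)·(y − x)^⊤ Q̃ (y − x) + (1/(2α))‖y − x‖². -/

import Mathlib

noncomputable section
open MeasureTheory Finset Set RealInnerProductSpace

abbrev Euc (d : ℕ) := EuclideanSpace ℝ (Fin d)

def blockMask {d m : ℕ} (blk : Fin d → Fin m) (j : Fin m) (z : Euc d) : Euc d :=
  (EuclideanSpace.equiv (Fin d) ℝ).symm fun i => if blk i = j then z i else 0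

def blockCombine {d m : ℕ} (blk : Fin d → Fin m) (j : ℕ) (x y : Euc d) : Euc d :=
  (EuclideanSpace.equiv (Fin d) ℝ).symm fun i => if (blk i : ℕ) + 1 ≤ j then x i else y i

def quadForm {d : ℕ} (Q : Matrix (Fin d) (Fin d) ℝ) (z : Euc d) : ℝ :=
  ∑ i, ∑ i', Q i i' * z i * z i'

def keepGE {d m : ℕ} (blk : Fin d → Fin m) (j : ℕ) (Q : Matrix (Fin d) (Fin d) ℝ) :
    Matrix (Fin d) (Fin d) ℝ :=
  Matrix.of fun i i' => if j ≤ (blk i : ℕ) + 1 ∧ j ≤ (blk i' : ℕ) + 1 then Q i i' else 0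

def Qtilde {d m : ℕ} (blk : Fin d → Fin m) (Q : Fin m → Matrix (Fin d) (Fin d) ℝ) :
    Matrix (Fin d) (Fin d) ℝ :=
  ∑ j : Fin m, (keepGE blk ((j : ℕ) + 1) (Q j) + keepGE blk ((j : ℕ) + 2) (Q j))

def specNorm {d : ℕ} (Q : Matrix (Fin d) (Fin d) ℝ) : ℝ :=
  ‖Matrix.toEuclideanCLM (𝕜 := ℝ) Q‖

def bigL {d m : ℕ} (blk : Fin d → Fin m) (Q : Fin m → Matrix (Fin d) (Fin d) ℝ) : ℝ :=
  Real.sqrt (2 * specNorm (Qtilde blk Q))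

def BlockLip {d m : ℕ} (blk : Fin d → Fin m) (f : Euc d → ℝ)
    (Q : Fin m → Matrix (Fin d) (Fin d) ℝ) : Prop :=
  ∀ (j : Fin m) (x y : Euc d),
    ‖blockMask blk j (gradient f x) - blockMask blk j (gradient f y)‖ ^ 2 ≤
      quadForm (Q j) (x - y)

def SubgradStrongConvex {d : ℕ} (γ : ℝ) (g : Euc d → ℝ) : Prop :=
  ∀ x y s : Euc d, (∀ z, g x + ⟪s, z - x⟫ ≤ g z) →
    g x + ⟪s, y - x⟫ + γ / 2 * ‖y - x‖ ^ 2 ≤ g y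


lemma blockMask_apply {d m : ℕ} (blk : Fin d → Fin m) (j : Fin m) (z : Euc d) (i : Fin d) :
    blockMask blk j z i = if blk i = j then z i else 0 := rfl

lemma blockCombine_apply {d m : ℕ} (blk : Fin d → Fin m) (j : ℕ) (x y : Euc d) (i : Fin d) :
    blockCombine blk j x y i = if (blk i : ℕ) + 1 ≤ j then x i else y i := rfl

lemma quadForm_nonneg {d : ℕ} {Q : Matrix (Fin d) (Fin d) ℝ} (h : Q.PosSemidef) (z : Euc d) :
    0 ≤ quadForm Q z := by
  have h2 := h.dotProduct_mulVec_nonneg (fun i => z i)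
  have e : dotProduct (star fun i => z i) (Q.mulVec fun i => z i) = quadForm Q z := by
    simp only [star_trivial, dotProduct, Matrix.mulVec, quadForm, Finset.mul_sum]
    exact Finset.sum_congr rfl fun i _ => Finset.sum_congr rfl fun i' _ => by ring
  rw [e] at h2
  exact_mod_cast h2

lemma quadForm_convex {d : ℕ} {Q : Matrix (Fin d) (Fin d) ℝ} (hQ : Q.PosSemidef)
    (p r : Euc d) {t : ℝ} (h0 : 0 ≤ t) (h1 : t ≤ 1) :
    quadForm Q ((1-t) • p + t • r) ≤ (1-t) * quadForm Q p + t * quadForm Q r := by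
  have key : quadForm Q ((1-t) • p + t • r) + t*(1-t) * quadForm Q (p - r)
      = (1-t) * quadForm Q p + t * quadForm Q r := by
    simp only [quadForm, Finset.mul_sum, ← Finset.sum_add_distrib]
    refine Finset.sum_congr rfl fun i _ => Finset.sum_congr rfl fun i' _ => ?_
    have e1 : ((1-t) • p + t • r) i = (1-t) * p i + t * r i := rfl
    have e2 : ((1-t) • p + t • r) i' = (1-t) * p i' + t * r i' := rfl
    have e3 : (p - r) i = p i - r i := rfl
    have e4 : (p - r) i' = p i' - r i' := rfl
    rw [e1, e2, e3, e4]; ring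
  nlinarith [quadForm_nonneg hQ (p - r), mul_nonneg h0 (by linarith : (0:ℝ) ≤ 1 - t)]

lemma quadForm_keepGE {d m : ℕ} (blk : Fin d → Fin m) (k : ℕ) (Q : Matrix (Fin d) (Fin d) ℝ)
    (z zz : Euc d) (h : ∀ i, zz i = if k ≤ (blk i : ℕ) + 1 then z i else 0) :
    quadForm Q zz = quadForm (keepGE blk k Q) z := by
  unfold quadForm keepGE
  refine Finset.sum_congr rfl fun i _ => Finset.sum_congr rfl fun i' _ => ?_
  rw [h i, h i', Matrix.of_apply]
  by_cases h1 : k ≤ (blk i : ℕ) + 1 <;> by_cases h2 : k ≤ (blk i' : ℕ) + 1 <;>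
    simp [h1, h2]

lemma quadForm_add {d : ℕ} (A B : Matrix (Fin d) (Fin d) ℝ) (z : Euc d) :
    quadForm (A + B) z = quadForm A z + quadForm B z := by
  simp only [quadForm, Matrix.add_apply, add_mul, Finset.sum_add_distrib]

lemma quadForm_sum {d n : ℕ} (M : Fin n → Matrix (Fin d) (Fin d) ℝ) (z : Euc d) :
    quadForm (∑ j, M j) z = ∑ j, quadForm (M j) z := by
  simp only [quadForm, Matrix.sum_apply, Finset.sum_mul]
  exact (Finset.sum_congr rfl fun i _ => Finset.sum_comm).trans Finset.sum_comm

lemma young {α a b q : ℝ} (hα : 0 < α) (ha : 0 ≤ a) (hb : 0 ≤ b) (h : a^2 ≤ q) :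
    a * b ≤ α/2 * q + 1/(2*α) * b^2 := by
  have key : a*b ≤ α/2 * a^2 + 1/(2*α) * b^2 := by
    rw [← sub_nonneg]
    have e : α/2 * a^2 + 1/(2*α)*b^2 - a*b = (α*a - b)^2 / (2*α) := by
      field_simp; ring
    rw [e]; positivity
  have h2 : α/2 * a^2 ≤ α/2 * q := by
    apply mul_le_mul_of_nonneg_left h (by positivity)
  linarith

lemma fderiv_inner_gradient {d : ℕ} {f : Euc d → ℝ} (h : Differentiable ℝ f) (z v : Euc d) :
    fderiv ℝ f z v = ⟪gradient f z, v⟫ := by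
  rw [((h z).hasGradientAt.hasFDerivAt).fderiv]
  simp [InnerProductSpace.toDualMap_apply_apply]

lemma inner_euc {d : ℕ} (g v : Euc d) : ⟪g, v⟫ = ∑ i, g i * v i := by
  simp [PiLp.inner_apply, RCLike.inner_apply, conj_trivial]
  exact Finset.sum_congr rfl fun i _ => mul_comm _ _

lemma norm_sq_euc {d : ℕ} (v : Euc d) : ‖v‖^2 = ∑ i, v i * v i := by
  rw [← real_inner_self_eq_norm_sq, inner_euc]

lemma block_step {d m : ℕ} (blk : Fin d → Fin m) (f : Euc d → ℝ)
    (hdiff : Differentiable ℝ f)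
    (Q : Fin m → Matrix (Fin d) (Fin d) ℝ) (hpsd : ∀ j, (Q j).PosSemidef)
    (hlip : BlockLip blk f Q) {α : ℝ} (hα : 0 < α) (x y : Euc d) (j : Fin m) :
    f (blockCombine blk (j : ℕ) x y) - f (blockCombine blk ((j : ℕ) + 1) x y) ≤
      ⟪gradient f x, blockMask blk j (y - x)⟫
      + α/4 * (quadForm (keepGE blk ((j : ℕ) + 1) (Q j)) (y - x)
               + quadForm (keepGE blk ((j : ℕ) + 2) (Q j)) (y - x))
      + 1/(2*α) * ‖blockMask blk j (y - x)‖^2 := by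
  set v : Euc d := blockMask blk j (y - x) with hv
  set w : Euc d := blockCombine blk ((j : ℕ) + 1) x y with hw
  set u : Euc d := w - x with hu
  -- coordinates of u and u+v
  have hui : ∀ i, u i = if (j : ℕ) + 2 ≤ (blk i : ℕ) + 1 then (y - x) i else 0 := by
    intro i
    have e : u i = w i - x i := rfl
    rw [e]
    by_cases hc : (blk i : ℕ) + 1 ≤ (j : ℕ) + 1
    · rw [if_neg (by omega), hw, blockCombine_apply, if_pos hc]; ring
    · rw [if_pos (by omega), hw, blockCombine_apply, if_neg hc]; rfl
  have hwv : blockCombine blk (j : ℕ) x y = w + v := by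
    refine PiLp.ext fun i => ?_
    have e : (w + v) i = w i + v i := rfl
    rw [e, hw, hv, blockCombine_apply, blockCombine_apply, blockMask_apply]
    by_cases h2 : blk i = j
    · have : (blk i : ℕ) = (j : ℕ) := by rw [h2]
      rw [if_neg (by omega), if_pos (by omega), if_pos h2]
      have : (y - x) i = y i - x i := rfl
      rw [this]; ring
    · have hne : (blk i : ℕ) ≠ (j : ℕ) := fun h => h2 (Fin.val_injective h)
      rw [if_neg h2]
      by_cases h3 : (blk i : ℕ) + 1 ≤ (j : ℕ)
      · rw [if_pos h3, if_pos (by omega)]; ring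
      · rw [if_neg h3, if_neg (by omega)]; ring
  have huvi : ∀ i, (u + v) i = if (j : ℕ) + 1 ≤ (blk i : ℕ) + 1 then (y - x) i else 0 := by
    intro i
    have e : (u + v) i = (blockCombine blk (j : ℕ) x y) i - x i := by
      rw [hwv]
      have a1 : (w - x + v) i = w i - x i + v i := rfl
      have a2 : (w + v) i - x i = w i + v i - x i := rfl
      rw [a1, a2]; ring
    rw [e, blockCombine_apply]
    by_cases hc : (blk i : ℕ) + 1 ≤ (j : ℕ)
    · rw [if_pos hc, if_neg (by omega)]; ring
    · rw [if_neg hc, if_pos (by omega)]; rfl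
  -- abbreviations
  set qu : ℝ := quadForm (Q j) u with hqu
  set quv : ℝ := quadForm (Q j) (u + v) with hquv
  set A : ℝ := ⟪gradient f x, v⟫ + α/2 * qu + 1/(2*α) * ‖v‖^2 with hA
  set B : ℝ := α/4 * (quv - qu) with hB
  -- pointwise derivative bound
  have hvi0 : ∀ i, blk i ≠ j → v i = 0 := by
    intro i hne
    rw [hv, blockMask_apply, if_neg hne]
  have hmaskinner : ∀ g : Euc d, ⟪g, v⟫ = ⟪blockMask blk j g, v⟫ := by
    intro g
    rw [inner_euc, inner_euc]
    refine Finset.sum_congr rfl fun i _ => ?_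
    rw [blockMask_apply blk j g]
    by_cases hc : blk i = j
    · rw [if_pos hc]
    · rw [if_neg hc, hvi0 i hc]; ring
  have hkey : ∀ t ∈ Icc (0:ℝ) 1, ⟪gradient f (w + t • v), v⟫ ≤ A + 2*B*t := by
    intro t ht
    obtain ⟨ht0, ht1⟩ := ht
    have harg : (w + t • v) - x = u + t • v := by
      rw [hu]; abel
    have hlip' := hlip j (w + t • v) x
    rw [harg] at hlip'
    -- convexity bound
    have hcomb : u + t • v = (1-t) • u + t • (u + v) := by
      rw [smul_add, sub_smul, one_smul]; abel
    have hconv2 : quadForm (Q j) (u + t • v) ≤ (1-t) * qu + t * quv := by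
      rw [hcomb]; exact quadForm_convex (hpsd j) u (u+v) ht0 ht1
    have hinner : ⟪gradient f (w + t • v), v⟫ - ⟪gradient f x, v⟫
        = ⟪blockMask blk j (gradient f (w + t • v)) - blockMask blk j (gradient f x), v⟫ := by
      rw [inner_sub_left, ← hmaskinner, ← hmaskinner]
    have hcs : ⟪blockMask blk j (gradient f (w + t • v)) - blockMask blk j (gradient f x), v⟫
        ≤ ‖blockMask blk j (gradient f (w + t • v)) - blockMask blk j (gradient f x)‖ * ‖v‖ :=
      real_inner_le_norm _ _
    have hyoung := young hα (norm_nonneg (blockMask blk j (gradient f (w + t • v)) - blockMask blk j (gradient f x))) (norm_nonneg v) (le_trans hlip' hconv2)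
    have : ⟪gradient f (w + t • v), v⟫ - ⟪gradient f x, v⟫
        ≤ α/2 * ((1-t) * qu + t * quv) + 1/(2*α) * ‖v‖^2 := by
      rw [hinner]; exact le_trans hcs hyoung
    rw [hA, hB]; nlinarith [this]
  -- the auxiliary function
  set ψ : ℝ → ℝ := fun t => (f w + A*t + B*t^2) - f (w + t • v) with hψ
  have hD : ∀ t : ℝ, HasDerivAt ψ (A + 2*B*t - ⟪gradient f (w + t • v), v⟫) t := by
    intro t
    have hline : HasDerivAt (fun s : ℝ => w + s • v) v t := by
      have h1 : HasDerivAt (fun s : ℝ => s • v) ((1:ℝ) • v) t :=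
        (hasDerivAt_id t).smul_const v
      rw [one_smul] at h1
      exact h1.const_add w
    have hfc : HasDerivAt (fun s : ℝ => f (w + s • v)) ⟪gradient f (w + t • v), v⟫ t := by
      have := ((hdiff (w + t • v)).hasFDerivAt).comp_hasDerivAt t hline
      rwa [fderiv_inner_gradient hdiff] at this
      -- might need adjusting
    have hpoly : HasDerivAt (fun s : ℝ => f w + A*s + B*s^2) (A + 2*B*t) t := by
      have h1 : HasDerivAt (fun s : ℝ => f w + A*s + B*s^2)
          (0 + A*1 + B*(↑2 * t^(2-1))) t := by
        exact (((hasDerivAt_const t (f w)).add ((hasDerivAt_id t).const_mul A)).add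
          ((hasDerivAt_pow 2 t).const_mul B))
      convert h1 using 1
      push_cast
      ring
    exact hpoly.sub hfc
  have hdiffψ : Differentiable ℝ ψ := fun t => (hD t).differentiableAt
  have hmono : MonotoneOn ψ (Icc (0:ℝ) 1) := by
    apply monotoneOn_of_deriv_nonneg (convex_Icc 0 1) hdiffψ.continuous.continuousOn
      (hdiffψ.differentiableOn)
    intro t ht
    rw [interior_Icc] at ht
    rw [(hD t).deriv]
    have := hkey t ⟨le_of_lt ht.1, le_of_lt ht.2⟩
    linarith
  have h01 : ψ 0 ≤ ψ 1 :=
    hmono (by constructor <;> norm_num) (by constructor <;> norm_num) zero_le_one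
  have hψ0 : ψ 0 = 0 := by
    rw [hψ]; simp
  have hψ1 : ψ 1 = f w + A + B - f (w + v) := by
    rw [hψ]; simp
  have hfin : f (w + v) - f w ≤ A + B := by
    rw [hψ0, hψ1] at h01; linarith
  rw [hwv]
  have e1 : qu = quadForm (keepGE blk ((j : ℕ) + 2) (Q j)) (y - x) :=
    quadForm_keepGE blk ((j : ℕ) + 2) (Q j) (y - x) u hui
  have e2 : quv = quadForm (keepGE blk ((j : ℕ) + 1) (Q j)) (y - x) :=
    quadForm_keepGE blk ((j : ℕ) + 1) (Q j) (y - x) (u + v) huvi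
  rw [hA, hB] at hfin
  rw [← e1, ← e2]
  linarith

theorem stmt2' {d m : ℕ} (blk : Fin d → Fin m)
    (f : Euc d → ℝ) (hdiff : Differentiable ℝ f)
    (Q : Fin m → Matrix (Fin d) (Fin d) ℝ) (hpsd : ∀ j, (Q j).PosSemidef)
    (hlip : BlockLip blk f Q) :
    ∀ α : ℝ, 0 < α → ∀ x y : Euc d,
      f y - f x ≤ ⟪gradient f x, y - x⟫ + α / 4 * quadForm (Qtilde blk Q) (y - x)
        + 1 / (2 * α) * ‖y - x‖ ^ 2 := by
  intro α hα x y
  set g : ℕ → ℝ := fun k => f (blockCombine blk k x y) with hg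
  have h0 : blockCombine blk 0 x y = y := by
    refine PiLp.ext fun i => ?_
    rw [blockCombine_apply, if_neg (by omega)]
  have hm : blockCombine blk m x y = x := by
    refine PiLp.ext fun i => ?_
    have := (blk i).isLt
    rw [blockCombine_apply, if_pos (by omega)]
  have htel : f y - f x = ∑ j : Fin m, (g (j : ℕ) - g ((j : ℕ) + 1)) := by
    rw [Fin.sum_univ_eq_sum_range (fun k => g k - g (k + 1)) m,
      Finset.sum_range_sub' g m, hg]
    simp only [h0, hm]
  have hstep : ∀ j : Fin m, g (j : ℕ) - g ((j : ℕ) + 1) ≤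
      ⟪gradient f x, blockMask blk j (y - x)⟫
      + α/4 * (quadForm (keepGE blk ((j : ℕ) + 1) (Q j)) (y - x)
               + quadForm (keepGE blk ((j : ℕ) + 2) (Q j)) (y - x))
      + 1/(2*α) * ‖blockMask blk j (y - x)‖^2 :=
    fun j => block_step blk f hdiff Q hpsd hlip hα x y j
  have hsum : f y - f x ≤ ∑ j : Fin m,
      (⟪gradient f x, blockMask blk j (y - x)⟫
      + α/4 * (quadForm (keepGE blk ((j : ℕ) + 1) (Q j)) (y - x)
               + quadForm (keepGE blk ((j : ℕ) + 2) (Q j)) (y - x))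
      + 1/(2*α) * ‖blockMask blk j (y - x)‖^2) := by
    rw [htel]
    exact Finset.sum_le_sum fun j _ => hstep j
  -- split the sum
  rw [Finset.sum_add_distrib, Finset.sum_add_distrib] at hsum
  -- identity 1: inner products
  have i1 : ∑ j : Fin m, ⟪gradient f x, blockMask blk j (y - x)⟫
      = ⟪gradient f x, y - x⟫ := by
    simp only [inner_euc]
    rw [Finset.sum_comm]
    refine Finset.sum_congr rfl fun i _ => ?_
    simp only [blockMask_apply, mul_ite, mul_zero]
    rw [Finset.sum_ite_eq Finset.univ (blk i) (fun _ => gradient f x i * (y - x) i)]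
    simp
  -- identity 2: quad forms
  have i2 : ∑ j : Fin m, α/4 * (quadForm (keepGE blk ((j : ℕ) + 1) (Q j)) (y - x)
               + quadForm (keepGE blk ((j : ℕ) + 2) (Q j)) (y - x))
      = α / 4 * quadForm (Qtilde blk Q) (y - x) := by
    rw [Qtilde, quadForm_sum, ← Finset.mul_sum]
    congr 1
    exact Finset.sum_congr rfl fun j _ => (quadForm_add _ _ _).symm
  -- identity 3: norms
  have i3 : ∑ j : Fin m, 1/(2*α) * ‖blockMask blk j (y - x)‖^2
      = 1 / (2 * α) * ‖y - x‖ ^ 2 := by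
    rw [← Finset.mul_sum]
    congr 1
    simp only [norm_sq_euc]
    rw [Finset.sum_comm]
    refine Finset.sum_congr rfl fun i _ => ?_
    have e : ∀ j : Fin m, blockMask blk j (y - x) i * blockMask blk j (y - x) i
        = if blk i = j then (y - x) i * (y - x) i else 0 := by
      intro j
      rw [blockMask_apply]
      split_ifs <;> simp
    rw [Finset.sum_congr rfl fun j _ => e j,
      Finset.sum_ite_eq Finset.univ (blk i) (fun _ => (y - x) i * (y - x) i)]
    simp
  rw [i1, i2, i3] at hsum
  linarith


theorem stmt2 {d m : ℕ} (blk : Fin d → Fin m) (hmono : Monotone blk)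
    (hsurj : Function.Surjective blk)
    (f : Euc d → ℝ) (hconv : ConvexOn ℝ Set.univ f) (hdiff : Differentiable ℝ f)
    (Q : Fin m → Matrix (Fin d) (Fin d) ℝ) (hpsd : ∀ j, (Q j).PosSemidef)
    (hlip : BlockLip blk f Q) :
    ∀ α : ℝ, 0 < α → ∀ x y : Euc d,
      f y - f x ≤ ⟪gradient f x, y - x⟫ + α / 4 * quadForm (Qtilde blk Q) (y - x)
        + 1 / (2 * α) * ‖y - x‖ ^ 2 := by
  exact stmt2' blk f hdiff Q hpsd hlip
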